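/- arXiv:2112.06604 — 3 statements merged into one kernel-verified Lean document; each statement's English description precedes it below -/
import Mathlib

section
/- Let C be a field, let W, D, F ∈ C⟦u⟧ be formal power series, let e ≥ 1 and ℓ ≥ 0 be integers, and let r ≥ 0 be an integer. Assume the constant coefficient of W is nonzero, that D has order exactly e, and that F has order exactly ℓ. Let M ⊆ C⟦u⟧ be the C-linear span of the family (W^{r−j}·D^{j}·F) for j = 0, …, r. For each integer i ≥ 0 define the linear functional a_i^* : M → C sending f to the coefficient of u^{i·e+ℓ} in f. Then the functionals a_0^*, a_1^*, …, a_r^* form a basis of the dual space M^* of the (r+1)-dimensional space M. -/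
/-- The coefficient functionals `a_i^*(f) = coeff (i*e+ℓ) f`, for `i = 0, …, r`, form a
basis of the dual of the span `M` of the family `W^(r-j) * D^j * F`, `j = 0, …, r`. -/
theorem stmt2 (C : Type*) [Field C] (W D F : PowerSeries C) (e ℓ r : ℕ)
    (he : 1 ≤ e)
    (hW : PowerSeries.coeff (R := C) 0 W ≠ 0)
    (hD0 : ∀ n < e, PowerSeries.coeff (R := C) n D = 0)
    (hDe : PowerSeries.coeff (R := C) e D ≠ 0)
    (hF0 : ∀ n < ℓ, PowerSeries.coeff (R := C) n F = 0)
    (hFl : PowerSeries.coeff (R := C) ℓ F ≠ 0) :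
    LinearIndependent C (fun i : Fin (r + 1) =>
      (PowerSeries.coeff (R := C) ((i : ℕ) * e + ℓ)).comp
        (Submodule.span C
          (Set.range fun j : Fin (r + 1) => W ^ (r - (j : ℕ)) * D ^ (j : ℕ) * F)).subtype) ∧
    Submodule.span C (Set.range fun i : Fin (r + 1) =>
      (PowerSeries.coeff (R := C) ((i : ℕ) * e + ℓ)).comp
        (Submodule.span C
          (Set.range fun j : Fin (r + 1) => W ^ (r - (j : ℕ)) * D ^ (j : ℕ) * F)).subtype)
      = ⊤ := by
  classical
  set g : Fin (r + 1) → PowerSeries C :=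
    fun j => W ^ (r - (j : ℕ)) * D ^ (j : ℕ) * F with hg
  -- orders
  have hWord : W.order = (0 : ℕ) := PowerSeries.order_eq_nat.mpr ⟨hW, by omega⟩
  have hDord : D.order = (e : ℕ) := PowerSeries.order_eq_nat.mpr ⟨hDe, hD0⟩
  have hFord : F.order = (ℓ : ℕ) := PowerSeries.order_eq_nat.mpr ⟨hFl, hF0⟩
  have hWpow : ∀ n : ℕ, (W ^ n).order = 0 := by
    intro n
    induction n with
    | zero => simp [PowerSeries.order_one]
    | succ n ih => rw [pow_succ, PowerSeries.order_mul, ih, hWord]; simp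
  have hDpow : ∀ n : ℕ, (D ^ n).order = (n * e : ℕ) := by
    intro n
    induction n with
    | zero => simp [PowerSeries.order_one]
    | succ n ih =>
        rw [pow_succ, PowerSeries.order_mul, ih, hDord]
        push_cast
        ring
  have hgord : ∀ j : Fin (r + 1), (g j).order = ((j : ℕ) * e + ℓ : ℕ) := by
    intro j
    rw [hg]
    simp only
    rw [PowerSeries.order_mul, PowerSeries.order_mul, hWpow, hDpow, hFord]
    push_cast
    ring
  -- the matrix of coefficients
  set A : Matrix (Fin (r + 1)) (Fin (r + 1)) C :=
    fun i j => PowerSeries.coeff (R := C) ((i : ℕ) * e + ℓ) (g j) with hA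
  have hAlt : ∀ i j : Fin (r + 1), i < j → A i j = 0 := by
    intro i j hij
    apply PowerSeries.coeff_of_lt_order
    rw [hgord j]
    exact_mod_cast Nat.add_lt_add_right
      (Nat.mul_lt_mul_of_lt_of_le (Fin.lt_iff_val_lt_val.mp hij) le_rfl (by omega)) ℓ
  have hAdiag : ∀ j : Fin (r + 1), A j j ≠ 0 := by
    intro j
    exact (PowerSeries.order_eq_nat.mp (hgord j)).1
  have hAunit : IsUnit A := by
    rw [Matrix.isUnit_iff_isUnit_det]
    rw [Matrix.det_of_lowerTriangular A (by intro i j hij; exact hAlt i j hij)]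
    exact (Finset.prod_ne_zero_iff.mpr fun j _ => hAdiag j).isUnit
  -- linear independence of the g j
  have hgind : LinearIndependent C g := by
    have hcols : LinearIndependent C (fun j => A.transpose j) :=
      Matrix.linearIndependent_cols_iff_isUnit.mpr hAunit
    refine LinearIndependent.of_comp
      (LinearMap.pi fun i : Fin (r + 1) => PowerSeries.coeff (R := C) ((i : ℕ) * e + ℓ)) ?_
    convert hcols with j <;> rfl
  -- the submodule and its basis
  set M := Submodule.span C (Set.range g) with hM
  let b : Module.Basis (Fin (r + 1)) C M := Module.Basis.span hgind
  have : FiniteDimensional C M := Module.Finite.of_basis b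
  have hfr : Module.finrank C M = r + 1 := by
    rw [Module.finrank_eq_card_basis b, Fintype.card_fin]
  -- the elements of M
  set v : Fin (r + 1) → M :=
    fun j => ⟨g j, Submodule.subset_span (Set.mem_range_self j)⟩ with hv
  set φ : Fin (r + 1) → (M →ₗ[C] C) :=
    fun i => (PowerSeries.coeff (R := C) ((i : ℕ) * e + ℓ)).comp M.subtype with hφ
  -- independence of the functionals
  have hφind : LinearIndependent C φ := by
    have hrows : LinearIndependent C (fun i => A i) :=
      Matrix.linearIndependent_rows_iff_isUnit.mpr hAunit
    refine LinearIndependent.of_comp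
      (LinearMap.pi fun j : Fin (r + 1) => LinearMap.applyₗ (v j)) ?_
    convert hrows with i <;> rfl
  refine ⟨hφind, ?_⟩
  refine hφind.span_eq_top_of_card_eq_finrank ?_
  rw [Fintype.card_fin]
  have : Module.finrank C (Module.Dual C M) = r + 1 := by
    rw [Subspace.dual_finrank_eq, hfr]
  exact this.symm
end

section
/- Let C be a field, let W, D, F ∈ C⟦u⟧ be formal power series, let e ≥ 1 and ℓ ≥ 0 be integers, and let r ≥ 0 be an integer. Assume the constant coefficient of W is nonzero, that D has order exactly e, and that F has order exactly ℓ. Let M ⊆ C⟦u⟧ be the C-linear span of the family (W^{r−j}·D^{j}·F) for j = 0, …, r. For an integer N ≥ 0, the subspace of tuples (c_0, c_1, …, c_{r+N+1}) ∈ C^{r+N+2} such that ∑_{i=0}^{r+N+1} c_i · (coefficient of u^{i·e+ℓ} in f) = 0 for every f ∈ M is a C-vector space of dimension N+1. -/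
open PowerSeries

/-- Leading-coefficient behaviour of a product of power series. -/
private lemma mul_lead {C : Type*} [Field C] (P Q : PowerSeries C) (a b : ℕ)
    (hP : ∀ n < a, PowerSeries.coeff n P = 0)
    (hQ : ∀ n < b, PowerSeries.coeff n Q = 0) :
    (∀ n < a + b, PowerSeries.coeff n (P * Q) = 0) ∧
      PowerSeries.coeff (a + b) (P * Q) =
        PowerSeries.coeff a P * PowerSeries.coeff b Q := by
  constructor
  · intro n hn
    rw [PowerSeries.coeff_mul]
    refine Finset.sum_eq_zero fun p hp => ?_
    rw [Finset.HasAntidiagonal.mem_antidiagonal] at hp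
    by_cases h1 : p.1 < a
    · rw [hP _ h1, zero_mul]
    · have : p.2 < b := by omega
      rw [hQ _ this, mul_zero]
  · rw [PowerSeries.coeff_mul]
    rw [Finset.sum_eq_single (a, b)]
    · intro p hp hne
      rw [Finset.HasAntidiagonal.mem_antidiagonal] at hp
      by_cases h1 : p.1 < a
      · rw [hP _ h1, zero_mul]
      · by_cases h2 : p.2 < b
        · rw [hQ _ h2, mul_zero]
        · exfalso
          apply hne
          have ha : p.1 = a := by omega
          have hb : p.2 = b := by omega
          exact Prod.ext ha hb
    · intro h
      exfalso; exact h (Finset.HasAntidiagonal.mem_antidiagonal.mpr rfl)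

/-- The space of linear relations `∑_{i=0}^{r+N+1} c_i · coeff (i*e+ℓ) f = 0` (for all `f`
in the span `M` of the family `W^(r-j) * D^j * F`, `j = 0, …, r`) among the initial
coefficients has dimension `N + 1`. -/
theorem stmt3 (C : Type*) [Field C] (W D F : PowerSeries C) (e ℓ r N : ℕ)
    (he : 1 ≤ e)
    (hW : PowerSeries.coeff 0 W ≠ 0)
    (hD0 : ∀ n < e, PowerSeries.coeff n D = 0)
    (hDe : PowerSeries.coeff e D ≠ 0)
    (hF0 : ∀ n < ℓ, PowerSeries.coeff n F = 0)
    (hFl : PowerSeries.coeff ℓ F ≠ 0)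
    (L : Submodule C (Fin (r + N + 2) → C))
    (hL : ∀ c : Fin (r + N + 2) → C, c ∈ L ↔
      ∀ f ∈ Submodule.span C
          (Set.range fun j : Fin (r + 1) => W ^ (r - (j : ℕ)) * D ^ (j : ℕ) * F),
        ∑ i : Fin (r + N + 2), c i * PowerSeries.coeff ((i : ℕ) * e + ℓ) f = 0) :
    Module.finrank C L = N + 1 := by
  classical
  set g : Fin (r + 1) → PowerSeries C :=
    fun j => W ^ (r - (j : ℕ)) * D ^ (j : ℕ) * F with hg
  -- leading coefficient facts for powers
  have hWpow : ∀ m : ℕ, PowerSeries.coeff 0 (W ^ m) ≠ 0 := by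
    intro m
    induction m with
    | zero => simp
    | succ k ih =>
      have := (mul_lead (W ^ k) W 0 0 (fun n hn => absurd hn (Nat.not_lt_zero n))
        (fun n hn => absurd hn (Nat.not_lt_zero n))).2
      rw [pow_succ]
      simp only [Nat.add_zero] at this
      rw [this]
      exact mul_ne_zero ih hW
  have hDpow : ∀ m : ℕ, (∀ n < m * e, PowerSeries.coeff n (D ^ m) = 0) ∧
      PowerSeries.coeff (m * e) (D ^ m) ≠ 0 := by
    intro m
    induction m with
    | zero =>
      constructor
      · intro n hn; omega
      · simp
    | succ k ih =>
      have key := mul_lead (D ^ k) D (k * e) e ih.1 hD0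
      constructor
      · intro n hn
        rw [pow_succ]
        rw [Nat.succ_mul] at hn
        exact key.1 n hn
      · rw [pow_succ]
        have : (k + 1) * e = k * e + e := by ring
        rw [this, key.2]
        exact mul_ne_zero ih.2 hDe
  -- leading coefficient facts for generators
  have hgen : ∀ j : Fin (r + 1),
      (∀ n < (j : ℕ) * e + ℓ, PowerSeries.coeff n (g j) = 0) ∧
        PowerSeries.coeff ((j : ℕ) * e + ℓ) (g j) ≠ 0 := by
    intro j
    have h1 := mul_lead (W ^ (r - (j : ℕ))) (D ^ (j : ℕ)) 0 ((j : ℕ) * e)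
      (fun n hn => absurd hn (Nat.not_lt_zero n)) (hDpow _).1
    have h1' : ∀ n < (j : ℕ) * e,
        PowerSeries.coeff n (W ^ (r - (j : ℕ)) * D ^ (j : ℕ)) = 0 := by
      intro n hn; exact h1.1 n (by omega)
    have h2 := mul_lead (W ^ (r - (j : ℕ)) * D ^ (j : ℕ)) F ((j : ℕ) * e) ℓ h1' hF0
    refine ⟨h2.1, ?_⟩
    rw [h2.2]
    have h1c : PowerSeries.coeff ((j : ℕ) * e)
        (W ^ (r - (j : ℕ)) * D ^ (j : ℕ)) =
        PowerSeries.coeff 0 (W ^ (r - (j : ℕ))) *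
          PowerSeries.coeff ((j : ℕ) * e) (D ^ (j : ℕ)) := by
      have := h1.2; simpa using this
    rw [h1c]
    exact mul_ne_zero (mul_ne_zero (hWpow _) (hDpow _).2) hFl
  -- the matrix
  set A : Matrix (Fin (r + 1)) (Fin (r + N + 2)) C :=
    Matrix.of fun j i => PowerSeries.coeff ((i : ℕ) * e + ℓ) (g j) with hA
  set T : (Fin (r + N + 2) → C) →ₗ[C] (Fin (r + 1) → C) := A.mulVecLin with hT
  -- L = ker T
  have hLker : L = LinearMap.ker T := by
    ext c
    rw [hL, LinearMap.mem_ker]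
    constructor
    · intro h
      funext j
      have hgj := h (g j) (Submodule.subset_span ⟨j, rfl⟩)
      simp only [hT, Matrix.mulVecLin_apply, Matrix.mulVec, dotProduct, hA,
        Matrix.of_apply, Pi.zero_apply]
      have hcomm : ∑ i : Fin (r + N + 2),
          PowerSeries.coeff ((i : ℕ) * e + ℓ) (g j) * c i =
          ∑ i : Fin (r + N + 2), c i * PowerSeries.coeff ((i : ℕ) * e + ℓ) (g j) :=
        Finset.sum_congr rfl fun i _ => mul_comm _ _
      rw [hcomm, hgj]
    · intro h f hf
      -- the functional
      set Φ : PowerSeries C →ₗ[C] C :=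
        ∑ i : Fin (r + N + 2), c i • (PowerSeries.coeff ((i : ℕ) * e + ℓ)) with hΦ
      have hΦ_apply : ∀ p : PowerSeries C,
          Φ p = ∑ i : Fin (r + N + 2), c i * PowerSeries.coeff ((i : ℕ) * e + ℓ) p := by
        intro p
        simp [hΦ, LinearMap.sum_apply]
      have hspan : Submodule.span C (Set.range g) ≤ LinearMap.ker Φ := by
        rw [Submodule.span_le]
        rintro _ ⟨j, rfl⟩
        rw [SetLike.mem_coe, LinearMap.mem_ker, hΦ_apply]
        have hj := congrFun h j
        simp only [hT, Matrix.mulVecLin_apply, Matrix.mulVec, dotProduct, hA,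
          Matrix.of_apply, Pi.zero_apply] at hj
        have hcomm : ∑ i : Fin (r + N + 2),
            c i * PowerSeries.coeff ((i : ℕ) * e + ℓ) (g j) =
            ∑ i : Fin (r + N + 2),
              PowerSeries.coeff ((i : ℕ) * e + ℓ) (g j) * c i :=
          Finset.sum_congr rfl fun i _ => mul_comm _ _
        rw [hcomm, hj]
      have := hspan hf
      rw [LinearMap.mem_ker] at this
      rw [← hΦ_apply]
      exact this
  -- T is surjective
  have hsurj : Function.Surjective T := by
    -- square submatrix
    set Msq : Matrix (Fin (r + 1)) (Fin (r + 1)) C :=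
      Matrix.of fun j i => A j (Fin.castLE (by omega) i) with hMsq
    have htri : Msq.BlockTriangular id := by
      intro i j hij
      simp only [id_eq] at hij
      simp only [hMsq, hA, Matrix.of_apply, Fin.coe_castLE]
      apply (hgen i).1
      have : (j : ℕ) < (i : ℕ) := hij
      have : (j : ℕ) * e < (i : ℕ) * e :=
        Nat.mul_lt_mul_of_pos_right this (by omega)
      omega
    have hdet : IsUnit Msq.det := by
      rw [Matrix.det_of_upperTriangular htri]
      apply IsUnit.mk0
      apply Finset.prod_ne_zero_iff.mpr
      intro j _
      simp only [hMsq, hA, Matrix.of_apply, Fin.coe_castLE]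
      exact (hgen j).2
    have hinv : Function.Surjective Msq.mulVec :=
      Matrix.mulVec_surjective_iff_isUnit.mpr ((Matrix.isUnit_iff_isUnit_det Msq).mpr hdet)
    intro y
    obtain ⟨x, hx⟩ := hinv y
    refine ⟨fun i => if h : (i : ℕ) < r + 1 then x ⟨(i : ℕ), h⟩ else 0, ?_⟩
    funext j
    simp only [hT, Matrix.mulVecLin_apply, Matrix.mulVec, dotProduct]
    have := congrFun hx j
    simp only [Matrix.mulVec, dotProduct] at this
    rw [← this]
    have hle : r + 1 ≤ r + N + 2 := by omega
    have hsum1 : (∑ i : Fin (r + N + 2),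
          A j i * (if h : (i : ℕ) < r + 1 then x ⟨(i : ℕ), h⟩ else 0))
        = ∑ i ∈ Finset.univ.map (Fin.castLEEmb hle),
            A j i * (if h : (i : ℕ) < r + 1 then x ⟨(i : ℕ), h⟩ else 0) := by
      symm
      apply Finset.sum_subset (Finset.subset_univ _)
      intro i _ hi
      have hni : ¬ (i : ℕ) < r + 1 := by
        intro hlt
        apply hi
        simp only [Finset.mem_map, Finset.mem_univ, Fin.castLEEmb_apply, true_and]
        exact ⟨⟨(i : ℕ), hlt⟩, by ext; simp⟩
      rw [dif_neg hni, mul_zero]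
    rw [hsum1, Finset.sum_map]
    apply Finset.sum_congr rfl
    intro i _
    simp only [Fin.castLEEmb_apply]
    have hi : ((Fin.castLE hle i : Fin (r + N + 2)) : ℕ) < r + 1 := i.isLt
    rw [dif_pos hi]
    have hxi : x ⟨((Fin.castLE hle i : Fin (r + N + 2)) : ℕ), hi⟩ = x i := by
      congr 1
    rw [hxi]
    simp [hMsq]
  -- rank-nullity
  have hrank := LinearMap.finrank_range_add_finrank_ker T
  rw [LinearMap.range_eq_top.mpr hsurj] at hrank
  have h1 : Module.finrank C (⊤ : Submodule C (Fin (r + 1) → C)) = r + 1 := by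
    rw [finrank_top]; simp [Module.finrank_fin_fun]
  have h2 : Module.finrank C (Fin (r + N + 2) → C) = r + N + 2 := by
    simp [Module.finrank_fin_fun]
  rw [h1, h2] at hrank
  rw [hLker]
  omega
end

section
/- Let p be an odd prime, r ≥ 1 an integer, and q = p^r. Let R be a commutative ring of characteristic p. Let α, m, l be natural numbers with 1 ≤ m ≤ α ≤ r, p^α dividing l, and 0 ≤ l < q. Let f, E ∈ R⟦u⟧ be formal power series such that every nonzero coefficient of f occurs at an exponent of the form j(q−1)+l for some integer j ≥ 0, every nonzero coefficient of E occurs at an exponent of the form i(q−1)+1 for some integer i ≥ 0, and the coefficient of u in E equals 1. Then the coefficient of u^{p^m(q−1)+1} in the product f·E^{q−l} equals the coefficient of u^{(p^m−1)(q−1)+l} in f. -/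
open PowerSeries Finset

private lemma aux_coeff_pow_char {p : ℕ} (hp : p.Prime) {R : Type*} [CommRing R] [CharP R p]
    (g : PowerSeries R) (b : ℕ) :
    PowerSeries.coeff b (g ^ p) = if p ∣ b then (PowerSeries.coeff (b / p) g) ^ p else 0 := by
  haveI : ExpChar R p := ExpChar.prime hp
  set P := trunc (b + 1) g with hP
  have h1 : PowerSeries.coeff b (g ^ p) = PowerSeries.coeff b ((P : R⟦X⟧) ^ p) := by
    conv_lhs => rw [← coeff_coe_trunc_of_lt (f := g ^ p) (Nat.lt_succ_self b),
      ← trunc_trunc_pow, coeff_coe_trunc_of_lt (Nat.lt_succ_self b)]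
  rw [h1, ← Polynomial.coe_pow, Polynomial.coeff_coe, ← Polynomial.map_frobenius_expand,
    Polynomial.coeff_map, Polynomial.coeff_expand hp.pos]
  split_ifs with h
  · rw [frobenius_def, ← Polynomial.coeff_coe, hP, coeff_coe_trunc_of_lt]
    exact lt_of_le_of_lt (Nat.div_le_self b p) (Nat.lt_succ_self b)
  · rw [frobenius_def, zero_pow hp.ne_zero]

private lemma aux_coeff_pow_char_pow {p : ℕ} (hp : p.Prime) {R : Type*} [CommRing R] [CharP R p]
    (g : PowerSeries R) (m b : ℕ) :
    PowerSeries.coeff b (g ^ (p ^ m)) =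
      if p ^ m ∣ b then (PowerSeries.coeff (b / p ^ m) g) ^ (p ^ m) else 0 := by
  induction m generalizing b with
  | zero => simp
  | succ m ih =>
    have : g ^ p ^ (m + 1) = (g ^ p ^ m) ^ p := by rw [← pow_mul, ← pow_succ]
    rw [this, aux_coeff_pow_char hp, ih (b / p)]
    by_cases hd : p ^ (m + 1) ∣ b
    · obtain ⟨k, rfl⟩ := hd
      have hppos := hp.pos
      have h1 : p ∣ p ^ (m + 1) * k := Dvd.dvd.mul_right (dvd_pow_self p (Nat.succ_ne_zero m)) k
      have h2 : p ^ (m + 1) * k / p = p ^ m * k := by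
        rw [pow_succ', mul_assoc, Nat.mul_div_cancel_left _ hppos]
      rw [if_pos h1, h2, if_pos (dvd_mul_right (p ^ m) k),
        if_pos (dvd_mul_right (p ^ (m + 1)) k),
        Nat.mul_div_cancel_left _ (pow_pos hppos m),
        Nat.mul_div_cancel_left _ (pow_pos hppos (m + 1)), ← pow_mul, ← pow_succ]
    · rw [if_neg hd]
      by_cases h1 : p ∣ b
      · obtain ⟨k, rfl⟩ := h1
        have h3 : ¬ p ^ m ∣ p * k / p := by
          rw [Nat.mul_div_cancel_left _ hp.pos]
          intro hdd
          obtain ⟨c, hc⟩ := hdd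
          exact hd ⟨c, by rw [hc]; ring⟩
        rw [if_pos ⟨k, rfl⟩, if_neg h3, zero_pow hp.ne_zero]
      · rw [if_neg h1]

/-- If all nonzero coefficients of `G` are at exponents of the form `i*Q + d`, then all
nonzero coefficients of `G^c` are at exponents of the form `i*Q + c*d`. -/
private lemma aux_supp_pow {R : Type*} [CommRing R] {G : PowerSeries R} {Q d : ℕ}
    (hG : ∀ x, PowerSeries.coeff x G ≠ 0 → ∃ i, x = i * Q + d) (c : ℕ) :
    ∀ b, PowerSeries.coeff b (G ^ c) ≠ 0 → ∃ i, b = i * Q + c * d := by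
  induction c with
  | zero =>
    intro b hb
    rw [pow_zero] at hb
    refine ⟨0, ?_⟩
    have : b = 0 := by
      by_contra h
      exact hb (by rw [PowerSeries.coeff_one, if_neg h])
    simp [this]
  | succ c ih =>
    intro b hb
    rw [pow_succ, PowerSeries.coeff_mul] at hb
    obtain ⟨⟨x, y⟩, hmem, hxy⟩ := Finset.exists_ne_zero_of_sum_ne_zero hb
    obtain ⟨i, hi⟩ := ih x (left_ne_zero_of_mul hxy)
    obtain ⟨i', hi'⟩ := hG y (right_ne_zero_of_mul hxy)
    rw [Finset.HasAntidiagonal.mem_antidiagonal] at hmem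
    exact ⟨i + i', by subst hi hi' hmem; ring⟩

private lemma aux_val_pow {R : Type*} [CommRing R] {G : PowerSeries R} {Q d : ℕ} (hQ : 0 < Q)
    (hG : ∀ x, PowerSeries.coeff x G ≠ 0 → ∃ i, x = i * Q + d)
    (hGd : PowerSeries.coeff d G = 1) (c : ℕ) :
    PowerSeries.coeff (c * d) (G ^ c) = 1 := by
  induction c with
  | zero => simp
  | succ c ih =>
    rw [pow_succ, PowerSeries.coeff_mul]
    rw [Finset.sum_eq_single (c * d, d)]
    · rw [ih, hGd, one_mul]
    · rintro ⟨x, y⟩ hmem hne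
      by_contra hxy
      obtain ⟨i, hi⟩ := aux_supp_pow hG c x (left_ne_zero_of_mul hxy)
      obtain ⟨i', hi'⟩ := hG y (right_ne_zero_of_mul hxy)
      rw [Finset.HasAntidiagonal.mem_antidiagonal] at hmem
      have h1 : i * Q + c * d + (i' * Q + d) = (c + 1) * d := by
        rw [← hi, ← hi']; exact hmem
      have h1' : (i + i') * Q + (c * d + d) = c * d + d := by
        calc (i + i') * Q + (c * d + d) = i * Q + c * d + (i' * Q + d) := by ring
          _ = (c + 1) * d := h1
          _ = c * d + d := by ring
      have h2 : (i + i') * Q = 0 :=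
        Nat.add_right_cancel (h1'.trans (zero_add (c * d + d)).symm)
      have h3 : i = 0 ∧ i' = 0 := by
        rcases Nat.mul_eq_zero.mp h2 with h | h
        · omega
        · omega
      have hx0 : x = c * d := by rw [hi, h3.1, zero_mul, zero_add]
      have hy0 : y = d := by rw [hi', h3.2, zero_mul, zero_add]
      exact hne (by rw [hx0, hy0])
    · intro h
      exact absurd (Finset.HasAntidiagonal.mem_antidiagonal.mpr (by ring)) h

/-- Coefficient computation behind Corollary 3.5: if `f` is supported on exponents
`j(q-1)+l`, `E` is supported on exponents `i(q-1)+1` with `coeff 1 E = 1`, `R` has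
characteristic `p`, `q = p^r`, `1 ≤ m ≤ α ≤ r`, `p^α ∣ l`, and `l < q`, then the
coefficient of `u^(p^m(q-1)+1)` in `f * E^(q-l)` equals the coefficient of
`u^((p^m-1)(q-1)+l)` in `f`. -/
theorem stmt4 (p r : ℕ) (hp : p.Prime) (hodd : Odd p) (hr : 1 ≤ r)
    (R : Type*) [CommRing R] [CharP R p]
    (α m l : ℕ) (hm : 1 ≤ m) (hmα : m ≤ α) (hαr : α ≤ r)
    (hdvd : p ^ α ∣ l) (hl : l < p ^ r)
    (f E : PowerSeries R)
    (hf : ∀ n : ℕ, PowerSeries.coeff n f ≠ 0 → ∃ j : ℕ, n = j * (p ^ r - 1) + l)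
    (hE : ∀ n : ℕ, PowerSeries.coeff n E ≠ 0 → ∃ i : ℕ, n = i * (p ^ r - 1) + 1)
    (hE1 : PowerSeries.coeff 1 E = 1) :
    PowerSeries.coeff (p ^ m * (p ^ r - 1) + 1) (f * E ^ (p ^ r - l)) =
      PowerSeries.coeff ((p ^ m - 1) * (p ^ r - 1) + l) f := by
  have hp2 : 2 ≤ p := hp.two_le
  have hq2 : 2 ≤ p ^ r := le_trans hp2 (Nat.le_self_pow (by omega) p)
  set q := p ^ r with hqdef
  set Q := q - 1 with hQdef
  have hQ : 0 < Q := by omega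
  have hqQ : q = Q + 1 := by omega
  have hpm : 0 < p ^ m := pow_pos hp.pos m
  -- p does not divide Q
  have hpq : p ∣ q := dvd_pow_self p (by omega)
  have hpQ : ¬ p ∣ Q := by
    intro h
    have h1 : p ∣ q - Q := Nat.dvd_sub hpq h
    rw [show q - Q = 1 by omega] at h1
    exact absurd (Nat.dvd_one.mp h1) (by omega)
  have hcop : Nat.Coprime (p ^ m) Q := Nat.Coprime.pow_left m ((hp.coprime_iff_not_dvd).mpr hpQ)
  set G := E ^ (p ^ m) with hGdef
  have hGd : PowerSeries.coeff (p ^ m) G = 1 := by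
    rw [hGdef, aux_coeff_pow_char_pow hp, if_pos dvd_rfl, Nat.div_self hpm, hE1, one_pow]
  have hGsupp : ∀ x, PowerSeries.coeff x G ≠ 0 → ∃ i, x = i * (p ^ m * Q) + p ^ m := by
    intro x hx
    obtain ⟨i, hi⟩ := aux_supp_pow hE (p ^ m) x hx
    rw [mul_one] at hi
    have hdx : p ^ m ∣ x := by
      by_contra hc
      rw [hGdef, aux_coeff_pow_char_pow hp, if_neg hc] at hx
      exact hx rfl
    have hdiQ : p ^ m ∣ i * Q := by
      have h5 := Nat.dvd_sub (hi ▸ hdx) (dvd_refl (p ^ m))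
      simpa using h5
    obtain ⟨i', rfl⟩ := hcop.dvd_of_dvd_mul_right hdiQ
    exact ⟨i', by rw [hi]; ring⟩
  have hml : p ^ m ∣ l := dvd_trans (pow_dvd_pow p hmα) hdvd
  have hmq : p ^ m ∣ q := pow_dvd_pow p (le_trans hmα hαr)
  have hdq : p ^ m ∣ q - l := Nat.dvd_sub hmq hml
  set c := (q - l) / p ^ m with hcdef
  have hc : p ^ m * c = q - l := Nat.mul_div_cancel' hdq
  have hEpow : E ^ (q - l) = G ^ c := by rw [hGdef, ← pow_mul, hc]
  have hGc_supp : ∀ b, PowerSeries.coeff b (G ^ c) ≠ 0 →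
      ∃ I, b = I * (p ^ m * Q) + c * p ^ m := aux_supp_pow hGsupp c
  have hGc_val : PowerSeries.coeff (c * p ^ m) (G ^ c) = 1 :=
    aux_val_pow (by positivity) hGsupp hGd c
  have hql : q - l = c * p ^ m := by rw [← hc]; ring
  have hls : l + (q - l) = q := by omega
  -- key arithmetic identity
  have hsum : ∀ j I : ℕ, (j * Q + l) + (I * (p ^ m * Q) + (q - l)) = (j + I * p ^ m + 1) * Q + 1 := by
    intro j I
    have h1 : (j * Q + l) + (I * (p ^ m * Q) + (q - l)) = (j + I * p ^ m) * Q + (l + (q - l)) := by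
      ring
    rw [h1, hls, hqQ]
    ring
  have hmem0 : ((p ^ m - 1) * Q + l) + (q - l) = p ^ m * Q + 1 := by
    have h6 := hsum (p ^ m - 1) 0
    simp only [zero_mul, zero_add, add_zero] at h6
    rw [h6, show p ^ m - 1 + 1 = p ^ m by omega]
  rw [hEpow, PowerSeries.coeff_mul]
  rw [Finset.sum_eq_single ((p ^ m - 1) * Q + l, q - l)]
  · rw [hql, hGc_val, mul_one]
  · rintro ⟨x, y⟩ hmem hne
    by_contra hxy
    obtain ⟨j, hj⟩ := hf x (left_ne_zero_of_mul hxy)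
    obtain ⟨I, hI⟩ := hGc_supp y (right_ne_zero_of_mul hxy)
    rw [← hql] at hI
    rw [Finset.HasAntidiagonal.mem_antidiagonal, hj, hI, hsum] at hmem
    have heq : j + I * p ^ m + 1 = p ^ m := by
      have := Nat.eq_of_mul_eq_mul_right hQ (by omega : (j + I * p ^ m + 1) * Q = p ^ m * Q)
      exact this
    rcases Nat.eq_zero_or_pos I with hI0 | hIpos
    · subst hI0
      simp only [zero_mul, zero_add] at hI heq
      exact hne (by rw [Prod.mk.injEq, hj, hI]; exact ⟨by rw [show j = p ^ m - 1 by omega], rfl⟩)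
    · have hle : p ^ m ≤ I * p ^ m := Nat.le_mul_of_pos_left _ hIpos
      obtain ⟨t, ht⟩ : ∃ t, I * p ^ m = t := ⟨_, rfl⟩
      rw [ht] at heq hle
      omega
  · intro h
    exact absurd (Finset.HasAntidiagonal.mem_antidiagonal.mpr hmem0) h
end
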